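/- If d is a divisor of degree 2g − 2 on a connected weightless loopless multigraph G of genus g, then r_G(d) ≤ g − 1, and r_G(d) = g − 1 if and only if d is linearly equivalent to the canonical divisor k_G. -/

import Mathlib

open Finset

section Preliminaries

variable {V : Type} [Fintype V] [DecidableEq V]

/-- The degree of a divisor on a graph with vertex set `V`. -/
def degDiv (d : V → ℤ) : ℤ := ∑ v, d v

/-- A divisor is effective if it is nonnegative at every vertex. -/
def Effective (d : V → ℤ) : Prop := ∀ v, 0 ≤ d v

/-- The principal divisor `t_Z` associated to a subset `Z` of vertices, for the
graph with edge multiplicity function `m`. -/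
def tZ (m : V → V → ℕ) (Z : Finset V) : V → ℤ := fun v =>
  if v ∈ Z then -(∑ u ∈ Zᶜ, (m v u : ℤ)) else ∑ u ∈ Z, (m v u : ℤ)

/-- Two divisors are linearly equivalent if their difference lies in the subgroup
generated by the divisors `t_Z`. -/
def LinEquiv (m : V → V → ℕ) (d d' : V → ℤ) : Prop :=
  d - d' ∈ AddSubgroup.closure (Set.range (tZ m))

/-- The simple graph associated to an edge multiplicity function `m`
(an edge between distinct `u`, `v` whenever `m u v > 0`; loops are discarded). -/
def assocGraph (m : V → V → ℕ) : SimpleGraph V where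
  Adj u v := u ≠ v ∧ (0 < m u v ∨ 0 < m v u)
  symm := ⟨fun _ _ h => ⟨h.1.symm, h.2.symm⟩⟩
  loopless := ⟨fun _ h => h.1 rfl⟩

end Preliminaries

section Rank

variable {V : Type} [Fintype V] [DecidableEq V]

/-- The set of integers `k` such that either `k = -1`, or `k ≥ 0` and for every
effective divisor `e` of degree `k`, the divisor `d - e` is linearly equivalent
to an effective divisor. -/
def bnRankSet (m : V → V → ℕ) (d : V → ℤ) : Set ℤ :=
  {k : ℤ | k = -1 ∨ (0 ≤ k ∧ ∀ e : V → ℤ, Effective e → degDiv e = k →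
      ∃ f : V → ℤ, Effective f ∧ LinEquiv m (d - e) f)}

/-- The Baker–Norine rank of a divisor `d` on the weightless loopless multigraph
with edge multiplicity function `m`. -/
noncomputable def bnRank (m : V → V → ℕ) (d : V → ℤ) : ℤ := sSup (bnRankSet m d)

end Rank

section Genus

variable {V : Type} [Fintype V] [DecidableEq V]

/-- The genus of a weightless loopless multigraph: `|E| - |V| + 1` where
`|E| = (1/2) ∑_{u,v} m u v`. -/
def genus (m : V → V → ℕ) : ℤ :=
  (∑ u, ∑ v, (m u v : ℤ)) / 2 - Fintype.card V + 1

/-- The canonical divisor of a weightless loopless multigraph: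
`k_G(v) = val(v) - 2`. -/
def canonical (m : V → V → ℕ) : V → ℤ := fun v => (∑ u, (m v u : ℤ)) - 2

end Genus

namespace BN

open Finset

variable {V : Type} [Fintype V] [DecidableEq V]

/-- The subgroup of principal divisors. -/
abbrev S (m : V → V → ℕ) : AddSubgroup (V → ℤ) := AddSubgroup.closure (Set.range (tZ m))

lemma linEquiv_iff {m : V → V → ℕ} {d d' : V → ℤ} : LinEquiv m d d' ↔ d - d' ∈ S m := Iff.rfl

set_option linter.unusedSectionVars false

lemma linEquiv_refl (m : V → V → ℕ) (d : V → ℤ) : LinEquiv m d d := by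
  simpa [LinEquiv] using zero_mem (S m)

lemma linEquiv_symm {m : V → V → ℕ} {d d' : V → ℤ} (h : LinEquiv m d d') : LinEquiv m d' d := by
  have := neg_mem h
  simpa [LinEquiv] using this

lemma linEquiv_trans {m : V → V → ℕ} {a b c : V → ℤ} (h1 : LinEquiv m a b) (h2 : LinEquiv m b c) :
    LinEquiv m a c := by
  have := add_mem h1 h2
  simpa [LinEquiv] using this

lemma tZ_mem (m : V → V → ℕ) (Z : Finset V) : tZ m Z ∈ S m :=
  AddSubgroup.subset_closure ⟨Z, rfl⟩

/-- The Laplacian. -/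
def lap (m : V → V → ℕ) (c : V → ℤ) : V → ℤ := fun v => ∑ u, (m v u : ℤ) * (c u - c v)

lemma tZ_eq_lap (m : V → V → ℕ) (Z : Finset V) :
    tZ m Z = lap m (fun v => if v ∈ Z then 1 else 0) := by
  funext v
  by_cases hv : v ∈ Z
  · simp only [tZ, lap, hv, if_pos]
    rw [← Finset.sum_compl_add_sum Z (f := fun u => (m v u : ℤ) * _)]
    have h1 : ∑ u ∈ Zᶜ, (m v u : ℤ) * ((if u ∈ Z then (1:ℤ) else 0) - 1) = -∑ u ∈ Zᶜ, (m v u : ℤ) := by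
      rw [← Finset.sum_neg_distrib]
      apply Finset.sum_congr rfl
      intro u hu
      rw [Finset.mem_compl] at hu
      simp [hu]
    have h2 : ∑ u ∈ Z, (m v u : ℤ) * ((if u ∈ Z then (1:ℤ) else 0) - 1) = 0 := by
      apply Finset.sum_eq_zero; intro u hu; simp [hu]
    rw [h1, h2, add_zero]
  · simp only [tZ, lap, hv, if_neg, not_false_iff]
    rw [← Finset.sum_compl_add_sum Z (f := fun u => (m v u : ℤ) * _)]
    have h1 : ∑ u ∈ Zᶜ, (m v u : ℤ) * ((if u ∈ Z then (1:ℤ) else 0) - 0) = 0 := by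
      apply Finset.sum_eq_zero; intro u hu
      rw [Finset.mem_compl] at hu
      simp [hu]
    have h2 : ∑ u ∈ Z, (m v u : ℤ) * ((if u ∈ Z then (1:ℤ) else 0) - 0) = ∑ u ∈ Z, (m v u : ℤ) := by
      apply Finset.sum_congr rfl; intro u hu; simp [hu]
    rw [h1, h2, zero_add]

lemma lap_add (m : V → V → ℕ) (c c' : V → ℤ) : lap m (c + c') = lap m c + lap m c' := by
  funext v
  simp only [lap, Pi.add_apply, ← Finset.sum_add_distrib]
  apply Finset.sum_congr rfl
  intro u _
  ring

lemma lap_neg (m : V → V → ℕ) (c : V → ℤ) : lap m (-c) = -(lap m c) := by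
  funext v
  simp only [lap, Pi.neg_apply, ← Finset.sum_neg_distrib]
  apply Finset.sum_congr rfl
  intro u _
  ring

lemma exists_lap_of_mem {m : V → V → ℕ} {x : V → ℤ} (hx : x ∈ S m) : ∃ c, x = lap m c := by
  induction hx using AddSubgroup.closure_induction with
  | mem y hy =>
      obtain ⟨Z, rfl⟩ := hy
      exact ⟨_, tZ_eq_lap m Z⟩
  | zero => exact ⟨0, by funext v; simp [lap]⟩
  | add a b ha hb iha ihb =>
      obtain ⟨c, rfl⟩ := iha
      obtain ⟨c', rfl⟩ := ihb
      exact ⟨c + c', (lap_add m c c').symm⟩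
  | neg a ha iha =>
      obtain ⟨c, rfl⟩ := iha
      exact ⟨-c, (lap_neg m c).symm⟩

lemma degDiv_add (a b : V → ℤ) : degDiv (a + b) = degDiv a + degDiv b := by
  simp [degDiv, Finset.sum_add_distrib]

lemma degDiv_sub (a b : V → ℤ) : degDiv (a - b) = degDiv a - degDiv b := by
  simp [degDiv, Finset.sum_sub_distrib]

lemma degDiv_neg (a : V → ℤ) : degDiv (-a) = -degDiv a := by
  simp [degDiv]

lemma degDiv_tZ (m : V → V → ℕ) (hsymm : ∀ u v, m u v = m v u) (Z : Finset V) :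
    degDiv (tZ m Z) = 0 := by
  unfold degDiv tZ
  rw [← Finset.sum_compl_add_sum Z]
  have h1 : ∑ v ∈ Zᶜ, (if v ∈ Z then -(∑ u ∈ Zᶜ, (m v u : ℤ)) else ∑ u ∈ Z, (m v u : ℤ))
      = ∑ v ∈ Zᶜ, ∑ u ∈ Z, (m v u : ℤ) := by
    apply Finset.sum_congr rfl; intro v hv
    rw [Finset.mem_compl] at hv; simp [hv]
  have h2 : ∑ v ∈ Z, (if v ∈ Z then -(∑ u ∈ Zᶜ, (m v u : ℤ)) else ∑ u ∈ Z, (m v u : ℤ))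
      = -∑ v ∈ Z, ∑ u ∈ Zᶜ, (m v u : ℤ) := by
    rw [← Finset.sum_neg_distrib]
    apply Finset.sum_congr rfl; intro v hv; simp [hv]
  rw [h1, h2, Finset.sum_comm]
  have : ∑ u ∈ Z, ∑ v ∈ Zᶜ, (m v u : ℤ) = ∑ v ∈ Z, ∑ u ∈ Zᶜ, (m v u : ℤ) := by
    apply Finset.sum_congr rfl; intro u _
    apply Finset.sum_congr rfl; intro v _
    rw [hsymm]
  rw [this]
  ring

lemma degDiv_eq_zero_of_mem {m : V → V → ℕ} (hsymm : ∀ u v, m u v = m v u)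
    {x : V → ℤ} (hx : x ∈ S m) : degDiv x = 0 := by
  induction hx using AddSubgroup.closure_induction with
  | mem y hy => obtain ⟨Z, rfl⟩ := hy; exact degDiv_tZ m hsymm Z
  | zero => simp [degDiv]
  | add a b ha hb iha ihb => rw [degDiv_add, iha, ihb, add_zero]
  | neg a ha iha => rw [degDiv_neg, iha, neg_zero]

lemma degDiv_eq_of_linEquiv {m : V → V → ℕ} (hsymm : ∀ u v, m u v = m v u)
    {d d' : V → ℤ} (h : LinEquiv m d d') : degDiv d = degDiv d' := by
  have := degDiv_eq_zero_of_mem hsymm h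
  rw [degDiv_sub] at this
  omega

end BN
namespace BN

open Finset

variable {V : Type} [Fintype V] [DecidableEq V]

set_option linter.unusedSectionVars false

/-- The divisor `ν_ρ` associated to an ordering (injective `ρ : V → ℕ`). -/
def nudiv (m : V → V → ℕ) (ρ : V → ℕ) : V → ℤ :=
  fun v => (∑ u ∈ univ.filter (fun u => ρ u < ρ v), (m v u : ℤ)) - 1

lemma sum_pairs (m : V → V → ℕ) (hsymm : ∀ u v, m u v = m v u) (hloop : ∀ v, m v v = 0)
    {ρ : V → ℕ} (hρ : Function.Injective ρ) :
    (∑ u, ∑ v, (m u v : ℤ)) =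
      2 * ∑ v, ∑ u ∈ univ.filter (fun u => ρ u < ρ v), (m v u : ℤ) := by
  have key : ∀ v u : V, (m v u : ℤ) =
      (if ρ u < ρ v then (m v u : ℤ) else 0) + (if ρ v < ρ u then (m v u : ℤ) else 0) := by
    intro v u
    rcases lt_trichotomy (ρ u) (ρ v) with h | h | h
    · rw [if_pos h, if_neg (by omega), add_zero]
    · have : u = v := hρ h
      subst this
      simp [hloop]
    · rw [if_neg (by omega), if_pos h, zero_add]
  have h1 : (∑ u, ∑ v, (m u v : ℤ)) = ∑ v, ∑ u, (m v u : ℤ) := rfl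
  rw [h1]
  have h2 : ∑ v, ∑ u, (m v u : ℤ)
      = (∑ v, ∑ u, if ρ u < ρ v then (m v u : ℤ) else 0)
        + ∑ v, ∑ u, if ρ v < ρ u then (m v u : ℤ) else 0 := by
    rw [← Finset.sum_add_distrib]
    apply Finset.sum_congr rfl; intro v _
    rw [← Finset.sum_add_distrib]
    apply Finset.sum_congr rfl; intro u _
    exact key v u
  have h3 : (∑ v, ∑ u, if ρ v < ρ u then (m v u : ℤ) else 0)
      = ∑ v, ∑ u, if ρ u < ρ v then (m v u : ℤ) else 0 := by
    rw [Finset.sum_comm]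
    apply Finset.sum_congr rfl; intro v _
    apply Finset.sum_congr rfl; intro u _
    rw [hsymm]
  have h4 : ∀ v : V, (∑ u ∈ univ.filter (fun u => ρ u < ρ v), (m v u : ℤ))
      = ∑ u, if ρ u < ρ v then (m v u : ℤ) else 0 := fun v => Finset.sum_filter _ _
  rw [h2, h3]
  rw [Finset.sum_congr rfl (fun v _ => h4 v)]
  ring

lemma degDiv_nudiv (m : V → V → ℕ) (hsymm : ∀ u v, m u v = m v u) (hloop : ∀ v, m v v = 0)
    {ρ : V → ℕ} (hρ : Function.Injective ρ) :
    degDiv (nudiv m ρ) = genus m - 1 := by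
  have hpair := sum_pairs m hsymm hloop hρ
  have hdeg : degDiv (nudiv m ρ)
      = (∑ v, ∑ u ∈ univ.filter (fun u => ρ u < ρ v), (m v u : ℤ)) - Fintype.card V := by
    unfold degDiv nudiv
    rw [Finset.sum_sub_distrib]
    simp [Finset.card_univ]
  rw [hdeg]
  unfold genus
  rw [hpair, Int.mul_ediv_cancel_left _ (by norm_num)]
  ring

lemma nudiv_reverse (m : V → V → ℕ) (hloop : ∀ v, m v v = 0)
    {ρ : V → ℕ} (hρ : Function.Injective ρ) :
    ∃ ρ' : V → ℕ, Function.Injective ρ' ∧ canonical m - nudiv m ρ = nudiv m ρ' := by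
  set M := univ.sup ρ with hM
  have hle : ∀ v : V, ρ v ≤ M := fun v => Finset.le_sup (mem_univ v)
  refine ⟨fun v => M - ρ v, ?_, ?_⟩
  · intro a b hab
    simp only at hab
    have := hle a; have := hle b
    exact hρ (by omega)
  · funext v
    have hrev : univ.filter (fun u => M - ρ u < M - ρ v) = univ.filter (fun u => ρ v < ρ u) := by
      ext u
      simp only [mem_filter, mem_univ, true_and]
      have := hle u; have := hle v
      omega
    have hins : univ.filter (fun u => ¬ ρ u < ρ v) = insert v (univ.filter (fun u => ρ v < ρ u)) := by
      ext u
      simp only [mem_filter, mem_univ, true_and, mem_insert, not_lt]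
      constructor
      · intro h
        rcases Nat.lt_or_ge (ρ v) (ρ u) with h' | h'
        · exact Or.inr h'
        · exact Or.inl (hρ (by omega))
      · rintro (rfl | h) <;> omega
    have hsplit : ∑ u, (m v u : ℤ)
        = (∑ u ∈ univ.filter (fun u => ρ u < ρ v), (m v u : ℤ))
          + ∑ u ∈ univ.filter (fun u => ¬ ρ u < ρ v), (m v u : ℤ) :=
      (Finset.sum_filter_add_sum_filter_not univ _ _).symm
    have hinsum : ∑ u ∈ univ.filter (fun u => ¬ ρ u < ρ v), (m v u : ℤ)
        = ∑ u ∈ univ.filter (fun u => ρ v < ρ u), (m v u : ℤ) := by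
      rw [hins, Finset.sum_insert (by simp)]
      simp [hloop]
    simp only [canonical, nudiv, Pi.sub_apply, hrev]
    rw [hsplit, hinsum]
    ring

lemma nudiv_not_equiv_eff (m : V → V → ℕ) (hne : Nonempty V)
    {ρ : V → ℕ} (hρ : Function.Injective ρ) :
    ¬ ∃ f, Effective f ∧ LinEquiv m (nudiv m ρ) f := by
  rintro ⟨f, hf, hlin⟩
  obtain ⟨c, hc⟩ := exists_lap_of_mem hlin
  obtain ⟨v1, -, hv1⟩ := Finset.exists_min_image univ c ⟨Classical.arbitrary V, mem_univ _⟩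
  obtain ⟨v, hvmem, hv⟩ :=
    Finset.exists_min_image (univ.filter fun u => c u = c v1) ρ ⟨v1, by simp⟩
  rw [mem_filter] at hvmem
  have hcv : c v = c v1 := hvmem.2
  have hfv : f v = nudiv m ρ v - lap m c v := by
    have := congrFun hc v
    simp only [Pi.sub_apply] at this
    linarith
  have hterm : ∀ u : V,
      (if ρ u < ρ v then (m v u : ℤ) else 0) - (m v u : ℤ) * (c u - c v) ≤ 0 := by
    intro u
    have hcu : c v ≤ c u := hcv ▸ hv1 u (mem_univ u)
    have hmnn : (0 : ℤ) ≤ (m v u : ℤ) := Int.natCast_nonneg _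
    by_cases h : ρ u < ρ v
    · have hne' : c u ≠ c v := by
        intro he
        have : u ∈ univ.filter (fun u => c u = c v1) := by
          simp [he, hcv]
        have := hv u this
        omega
      have h1 : c v + 1 ≤ c u := by omega
      rw [if_pos h]
      nlinarith
    · rw [if_neg h]
      nlinarith
  have hkey : nudiv m ρ v - lap m c v ≤ -1 := by
    unfold nudiv lap
    rw [Finset.sum_filter]
    have : (∑ u, if ρ u < ρ v then (m v u : ℤ) else 0) - 1 - ∑ u, (m v u : ℤ) * (c u - c v)
        = (∑ u, ((if ρ u < ρ v then (m v u : ℤ) else 0) - (m v u : ℤ) * (c u - c v))) - 1 := by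
      rw [Finset.sum_sub_distrib]
      ring
    rw [this]
    have : (∑ u, ((if ρ u < ρ v then (m v u : ℤ) else 0) - (m v u : ℤ) * (c u - c v))) ≤ 0 :=
      Finset.sum_nonpos (fun u _ => hterm u)
    omega
  have := hf v
  omega

lemma eff_deg_zero {f : V → ℤ} (hf : Effective f) (h : degDiv f = 0) : f = 0 := by
  funext v
  have := (Finset.sum_eq_zero_iff_of_nonneg (fun u _ => hf u)).mp h v (mem_univ v)
  simpa using this

end BN
namespace BN

open Finset

variable {V : Type} [Fintype V] [DecidableEq V]

set_option linter.unusedSectionVars false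

lemma tZ_apply_not_mem (m : V → V → ℕ) {Z : Finset V} {v : V} (h : v ∉ Z) :
    tZ m Z v = ∑ u ∈ Z, (m v u : ℤ) := if_neg h

lemma tZ_apply_mem (m : V → V → ℕ) {Z : Finset V} {v : V} (h : v ∈ Z) :
    tZ m Z v = -∑ u ∈ Zᶜ, (m v u : ℤ) := if_pos h

/-- BFS layers from `q`. -/
def Zl (m : V → V → ℕ) (q : V) : ℕ → Finset V
  | 0 => {q}
  | k + 1 => Zl m q k ∪ univ.filter (fun v => ∃ u ∈ Zl m q k, 0 < m v u)

lemma Zl_mono (m : V → V → ℕ) (q : V) : Monotone (Zl m q) :=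
  monotone_nat_of_le_succ (fun k => by
    show Zl m q k ⊆ _
    rw [Zl]
    exact Finset.subset_union_left)

lemma walk_mem_Zl (m : V → V → ℕ) (hsymm : ∀ u v, m u v = m v u) (q : V) :
    ∀ {a b : V}, (assocGraph m).Walk a b → ∀ k, a ∈ Zl m q k → ∃ j, b ∈ Zl m q j := by
  intro a b w
  induction w with
  | nil => exact fun k hk => ⟨k, hk⟩
  | @cons a c b h p ih =>
      intro k hk
      apply ih (k + 1)
      show c ∈ Zl m q (k + 1)
      rw [Zl, Finset.mem_union]
      right
      rw [Finset.mem_filter]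
      refine ⟨mem_univ c, ⟨a, hk, ?_⟩⟩
      rcases (show a ≠ c ∧ (0 < m a c ∨ 0 < m c a) from h).2 with h' | h'
      · rwa [hsymm a c] at h'
      · exact h'

lemma exists_mem_Zl (m : V → V → ℕ) (hsymm : ∀ u v, m u v = m v u)
    (hconn : (assocGraph m).Connected) (q : V) (v : V) : ∃ k, v ∈ Zl m q k := by
  obtain ⟨w⟩ := hconn.preconnected q v
  exact walk_mem_Zl m hsymm q w 0 (by rw [Zl]; exact mem_singleton_self q)

/-- A rank function from `q`: every other vertex has a strictly lower-rank neighbor. -/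
lemma exists_rank (m : V → V → ℕ) (hsymm : ∀ u v, m u v = m v u)
    (hconn : (assocGraph m).Connected) (q : V) :
    ∃ r : V → ℕ, r q = 0 ∧ ∀ v, v ≠ q → ∃ u, 0 < m v u ∧ r u < r v := by
  have hex : ∀ v, ∃ k, v ∈ Zl m q k := exists_mem_Zl m hsymm hconn q
  refine ⟨fun v => Nat.find (hex v), ?_, ?_⟩
  · rw [Nat.find_eq_zero]
    rw [Zl]
    exact mem_singleton_self q
  · intro v hv
    have hspec := Nat.find_spec (hex v)
    rcases Nat.eq_zero_or_pos (Nat.find (hex v)) with h0 | hpos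
    · rw [h0, Zl, mem_singleton] at hspec
      exact absurd hspec hv
    · obtain ⟨j, hj⟩ : ∃ j, Nat.find (hex v) = j + 1 := ⟨Nat.find (hex v) - 1, by omega⟩
      rw [hj] at hspec
      have hnot : v ∉ Zl m q j := Nat.find_min (hex v) (by omega)
      rw [Zl, Finset.mem_union] at hspec
      rcases hspec with h | h
      · exact absurd h hnot
      · rw [Finset.mem_filter] at h
        obtain ⟨-, u, hu, hmu⟩ := h
        refine ⟨u, hmu, ?_⟩
        have : Nat.find (hex u) ≤ j := Nat.find_le hu
        simp only []
        omega

/-- The cut between a set avoiding `q` and its complement contains an edge,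
whose outside endpoint has rank strictly below everything in the set. -/
lemma cut_edge (m : V → V → ℕ) {r : V → ℕ} (hr0 : r q = 0)
    (hrstep : ∀ v, v ≠ q → ∃ u, 0 < m v u ∧ r u < r v)
    {B : Finset V} (hB : B.Nonempty) (hqB : q ∉ B) :
    ∃ b ∈ B, ∃ a ∈ Bᶜ, 0 < m b a ∧ r a < r b ∧ ∀ b' ∈ B, r b ≤ r b' := by
  obtain ⟨b, hbB, hbmin⟩ := Finset.exists_min_image B r hB
  have hbq : b ≠ q := fun h => hqB (h ▸ hbB)
  obtain ⟨a, hma, hra⟩ := hrstep b hbq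
  refine ⟨b, hbB, a, ?_, hma, hra, hbmin⟩
  rw [Finset.mem_compl]
  intro haB
  have := hbmin a haB
  omega

/-- Greedy construction of an ordering, or a stuck set. -/
lemma greedy (m : V → V → ℕ) (D : V → ℤ) (q : V) :
    (∃ ρ : V → ℕ, Function.Injective ρ ∧ ρ q = 0 ∧
      ∀ v, v ≠ q → D v < ∑ u ∈ univ.filter (fun u => ρ u < ρ v), (m v u : ℤ))
    ∨ (∃ B : Finset V, B.Nonempty ∧ q ∉ B ∧
        ∀ v ∈ B, (∑ u ∈ Bᶜ, (m v u : ℤ)) ≤ D v) := by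
  suffices h : ∀ (n : ℕ) (A : Finset V) (ρ : V → ℕ), Aᶜ.card = n → q ∈ A → ρ q = 0 →
      (∀ a ∈ A, ρ a < A.card) →
      (∀ a ∈ A, ∀ b ∈ A, ρ a = ρ b → a = b) →
      (∀ a ∈ A, a ≠ q → D a < ∑ u ∈ A.filter (fun u => ρ u < ρ a), (m a u : ℤ)) →
      ((∃ ρ' : V → ℕ, Function.Injective ρ' ∧ ρ' q = 0 ∧
        ∀ v, v ≠ q → D v < ∑ u ∈ univ.filter (fun u => ρ' u < ρ' v), (m v u : ℤ))
      ∨ (∃ B : Finset V, B.Nonempty ∧ q ∉ B ∧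
          ∀ v ∈ B, (∑ u ∈ Bᶜ, (m v u : ℤ)) ≤ D v)) by
    refine h (({q} : Finset V)ᶜ.card) {q} (fun _ => 0) rfl (mem_singleton_self q) rfl ?_ ?_ ?_
    · intro a ha; rw [mem_singleton] at ha; subst ha; simp
    · intro a ha b hb _; rw [mem_singleton] at ha hb; rw [ha, hb]
    · intro a ha ha'; rw [mem_singleton] at ha; exact absurd ha ha'
  intro n
  induction n with
  | zero =>
      intro A ρ hcard hq hρq hbound hinj hord
      have hA : A = univ := by
        apply Finset.eq_univ_of_card
        have h1 := Finset.card_compl (s := A)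
        have h2 := Finset.card_le_univ A
        rw [hcard] at h1
        omega
      subst hA
      left
      exact ⟨ρ, fun a b hab => hinj a (mem_univ a) b (mem_univ b) hab, hρq,
        fun v hv => hord v (mem_univ v) hv⟩
  | succ n ih =>
      intro A ρ hcard hq hρq hbound hinj hord
      have hBne : Aᶜ.Nonempty := Finset.card_pos.mp (by omega)
      by_cases hstuck : ∀ w ∈ Aᶜ, (∑ u ∈ A, (m w u : ℤ)) ≤ D w
      · right
        refine ⟨Aᶜ, hBne, by simp [hq], ?_⟩
        rw [compl_compl]
        exact hstuck
      · push_neg at hstuck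
        obtain ⟨v, hvB, hvlt⟩ := hstuck
        have hvA : v ∉ A := Finset.mem_compl.mp hvB
        have hqv : q ≠ v := fun h => hvA (h ▸ hq)
        set ρ' := Function.update ρ v A.card with hρ'
        have hρ'A : ∀ a ∈ A, ρ' a = ρ a := fun a ha =>
          Function.update_of_ne (by rintro rfl; exact hvA ha) _ _
        have hρ'v : ρ' v = A.card := Function.update_self _ _ _
        have hcardins : (insert v A).card = A.card + 1 := Finset.card_insert_of_notMem hvA
        apply ih (insert v A) ρ'
        · rw [Finset.card_compl, hcardins]
          rw [Finset.card_compl] at hcard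
          have := Finset.card_le_univ (insert v A)
          rw [hcardins] at this
          omega
        · exact Finset.mem_insert_of_mem hq
        · rw [hρ'A q hq]; exact hρq
        · intro a ha
          rw [hcardins]
          rcases Finset.mem_insert.mp ha with rfl | haA
          · rw [hρ'v]; omega
          · rw [hρ'A a haA]; have := hbound a haA; omega
        · intro a ha b hb hab
          rcases Finset.mem_insert.mp ha with rfl | haA <;>
            rcases Finset.mem_insert.mp hb with rfl | hbA
          · rfl
          · rw [hρ'v, hρ'A b hbA] at hab
            have := hbound b hbA; omega
          · rw [hρ'v, hρ'A a haA] at hab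
            have := hbound a haA; omega
          · rw [hρ'A a haA, hρ'A b hbA] at hab
            exact hinj a haA b hbA hab
        · intro a ha haq
          rcases Finset.mem_insert.mp ha with rfl | haA
          · have hfil : (insert a A).filter (fun u => ρ' u < ρ' a) = A := by
              ext u
              rw [Finset.mem_filter, Finset.mem_insert]
              constructor
              · rintro ⟨rfl | huA, hlt⟩
                · omega
                · exact huA
              · intro huA
                refine ⟨Or.inr huA, ?_⟩
                rw [hρ'A u huA, hρ'v]
                exact hbound u huA
            rw [hfil]
            exact hvlt
          · have hfil : (insert v A).filter (fun u => ρ' u < ρ' a)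
                = A.filter (fun u => ρ u < ρ a) := by
              ext u
              rw [Finset.mem_filter, Finset.mem_filter, Finset.mem_insert]
              constructor
              · rintro ⟨rfl | huA, hlt⟩
                · rw [hρ'v, hρ'A a haA] at hlt
                  have := hbound a haA; omega
                · rw [hρ'A u huA, hρ'A a haA] at hlt
                  exact ⟨huA, hlt⟩
              · rintro ⟨huA, hlt⟩
                refine ⟨Or.inr huA, ?_⟩
                rw [hρ'A u huA, hρ'A a haA]
                exact hlt
            rw [hfil]
            exact hord a haA haq

/-- Stage 1: any divisor is equivalent to one effective away from `q`. -/
lemma stage1 (m : V → V → ℕ) (hsymm : ∀ u v, m u v = m v u)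
    (hconn : (assocGraph m).Connected) (q : V) (D : V → ℤ) :
    ∃ D', LinEquiv m D D' ∧ ∀ v, v ≠ q → 0 ≤ D' v := by
  have hex : ∀ v, ∃ k, v ∈ Zl m q k := exists_mem_Zl m hsymm hconn q
  choose f hf using hex
  set K := univ.sup f with hK
  have hZK : ∀ v, v ∈ Zl m q K :=
    fun v => Zl_mono m q (Finset.le_sup (mem_univ v)) (hf v)
  have main : ∀ j : ℕ, ∃ D', LinEquiv m D D' ∧ ∀ v, v ∉ Zl m q (K - j) → 0 ≤ D' v := by
    intro j
    induction j with
    | zero => exact ⟨D, linEquiv_refl m D, fun v hv => absurd (hZK v) (by simpa using hv)⟩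
    | succ j ihj =>
        obtain ⟨D', hD'equiv, hD'⟩ := ihj
        rcases Nat.eq_zero_or_pos (K - j) with h0 | hpos
        · refine ⟨D', hD'equiv, ?_⟩
          have : K - (j + 1) = K - j := by omega
          rw [this]
          exact hD'
        · obtain ⟨k, hkj⟩ : ∃ k, K - j = k + 1 := ⟨K - j - 1, by omega⟩
          have hkj' : K - (j + 1) = k := by omega
          set c : ℤ := ∑ w ∈ Zl m q (k + 1), max 0 (-D' w) with hc
          have hcnn : 0 ≤ c := Finset.sum_nonneg (fun w _ => le_max_left _ _)
          refine ⟨D' + c • tZ m (Zl m q k), ?_, ?_⟩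
          · apply linEquiv_trans hD'equiv
            rw [linEquiv_iff]
            have : D' - (D' + c • tZ m (Zl m q k)) = -(c • tZ m (Zl m q k)) := by abel
            rw [this]
            exact neg_mem (zsmul_mem (tZ_mem m _) c)
          · intro v hv
            rw [hkj'] at hv
            by_cases hv1 : v ∈ Zl m q (k + 1)
            · -- v in the new layer
              have hvfil : v ∈ univ.filter (fun w => ∃ u ∈ Zl m q k, 0 < m w u) := by
                have := hv1
                rw [Zl, Finset.mem_union] at this
                tauto
              rw [Finset.mem_filter] at hvfil
              obtain ⟨-, u, huZ, hmu⟩ := hvfil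
              have htZ1 : 1 ≤ tZ m (Zl m q k) v := by
                rw [tZ_apply_not_mem m hv]
                calc (1 : ℤ) ≤ (m v u : ℤ) := by exact_mod_cast hmu
                  _ ≤ _ := Finset.single_le_sum (fun w _ => Int.natCast_nonneg _) huZ
              have hcle : -D' v ≤ c := by
                rw [hc]
                calc -D' v ≤ max 0 (-D' v) := le_max_right _ _
                  _ ≤ _ := Finset.single_le_sum (f := fun w => max 0 (-D' w)) (fun w _ => le_max_left _ _) hv1
              have : c ≤ c * tZ m (Zl m q k) v := le_mul_of_one_le_right hcnn htZ1
              simp only [Pi.add_apply, Pi.smul_apply, smul_eq_mul]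
              omega
            · -- v outside: only gains
              have hvk : v ∉ Zl m q k := fun h => hv1 (Zl_mono m q (Nat.le_succ k) h)
              have htZ0 : 0 ≤ tZ m (Zl m q k) v := by
                rw [tZ_apply_not_mem m hvk]
                exact Finset.sum_nonneg (fun w _ => Int.natCast_nonneg _)
              have hD'v : 0 ≤ D' v := hD' v (by rw [hkj]; exact hv1)
              simp only [Pi.add_apply, Pi.smul_apply, smul_eq_mul]
              nlinarith
  obtain ⟨D', h1, h2⟩ := main K
  refine ⟨D', h1, fun v hv => h2 v ?_⟩
  simp only [Nat.sub_self]
  rw [Zl, mem_singleton]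
  exact hv

end BN
namespace BN

open Finset

variable {V : Type} [Fintype V] [DecidableEq V]

set_option linter.unusedSectionVars false
set_option maxHeartbeats 1000000

lemma fire_bound (m : V → V → ℕ) (hsymm : ∀ u v, m u v = m v u) {q : V} {r : V → ℕ}
    (hr0 : r q = 0) (hrstep : ∀ v, v ≠ q → ∃ u, 0 < m v u ∧ r u < r v)
    {B : Finset V} (hB : B.Nonempty) (hqB : q ∉ B) :
    1 ≤ ∑ v, tZ m B v * ((∑ x, ∑ y, (m x y : ℤ)) + 1) ^ (univ.sup r - r v) := by
  set W : ℤ := ∑ x, ∑ y, (m x y : ℤ) with hWdef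
  set N : ℕ := univ.sup r with hNdef
  set w : V → ℤ := fun v => (W + 1) ^ (N - r v) with hwdef
  show 1 ≤ ∑ v, tZ m B v * w v
  have hW0 : 0 ≤ W := Finset.sum_nonneg fun x _ => Finset.sum_nonneg fun y _ => Int.natCast_nonneg _
  have hbase : (1 : ℤ) ≤ W + 1 := by omega
  have hwnn : ∀ v, 0 ≤ w v := fun v => pow_nonneg (by omega) _
  have hrN : ∀ v, r v ≤ N := fun v => Finset.le_sup (mem_univ v)
  obtain ⟨b0, hb0, a0, ha0, hm0, hra0, hbmin⟩ := cut_edge m hr0 hrstep hB hqB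
  rw [Finset.mem_compl] at ha0
  set X : ℤ := (W + 1) ^ (N - r b0) with hX
  have hX1 : 1 ≤ X := one_le_pow₀ hbase
  have hwb : ∀ b ∈ B, w b ≤ X := fun b hb =>
    pow_le_pow_right₀ hbase (by have := hbmin b hb; omega)
  have hwa0 : (W + 1) * X ≤ w a0 := by
    have h1 : N - r b0 + 1 ≤ N - r a0 := by have := hrN b0; omega
    calc (W + 1) * X = (W + 1) ^ (N - r b0 + 1) := by rw [pow_succ]; ring
      _ ≤ (W + 1) ^ (N - r a0) := pow_le_pow_right₀ hbase h1
      _ = w a0 := rfl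
  set F : V × V → ℤ := fun p => (m p.1 p.2 : ℤ) * (w p.2 - w p.1) with hF
  have hpair : ∑ v, tZ m B v * w v = ∑ p ∈ B ×ˢ Bᶜ, F p := by
    rw [Finset.sum_product]
    rw [← Finset.sum_add_sum_compl B (fun v => tZ m B v * w v)]
    have h1 : ∑ v ∈ B, tZ m B v * w v = ∑ b ∈ B, -(∑ a ∈ Bᶜ, (m b a : ℤ) * w b) := by
      apply Finset.sum_congr rfl
      intro v hv
      rw [tZ_apply_mem m hv, neg_mul, Finset.sum_mul]
    have h2 : ∑ v ∈ Bᶜ, tZ m B v * w v = ∑ b ∈ B, ∑ a ∈ Bᶜ, (m b a : ℤ) * w a := by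
      calc ∑ v ∈ Bᶜ, tZ m B v * w v = ∑ v ∈ Bᶜ, ∑ u ∈ B, (m v u : ℤ) * w v := by
            apply Finset.sum_congr rfl
            intro v hv
            rw [tZ_apply_not_mem m (Finset.mem_compl.mp hv), Finset.sum_mul]
        _ = ∑ u ∈ B, ∑ v ∈ Bᶜ, (m v u : ℤ) * w v := Finset.sum_comm
        _ = ∑ b ∈ B, ∑ a ∈ Bᶜ, (m b a : ℤ) * w a := by
            apply Finset.sum_congr rfl; intro b _
            apply Finset.sum_congr rfl; intro a _
            rw [hsymm]
    rw [h1, h2, ← Finset.sum_add_distrib]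
    apply Finset.sum_congr rfl
    intro b _
    have : ∀ a ∈ Bᶜ, F (b, a) = (m b a : ℤ) * w a - (m b a : ℤ) * w b := by
      intro a _
      simp only [hF]
      ring
    rw [Finset.sum_congr rfl this, Finset.sum_sub_distrib]
    ring
  have hp0mem : (b0, a0) ∈ B ×ˢ Bᶜ := Finset.mem_product.mpr ⟨hb0, Finset.mem_compl.mpr ha0⟩
  have hsplit : ∑ p ∈ B ×ˢ Bᶜ, F p = F (b0, a0) + ∑ p ∈ (B ×ˢ Bᶜ).erase (b0, a0), F p :=
    (Finset.add_sum_erase _ F hp0mem).symm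
  have hm01 : (1 : ℤ) ≤ (m b0 a0 : ℤ) := by exact_mod_cast hm0
  have hWX : 0 ≤ W * X := mul_nonneg hW0 (by omega)
  have hF0 : W * X ≤ F (b0, a0) := by
    have h2 : W * X ≤ w a0 - w b0 := by
      have h3 : (W + 1) * X = W * X + X := by ring
      have h4 := hwb b0 hb0
      linarith
    calc W * X ≤ w a0 - w b0 := h2
      _ ≤ (m b0 a0 : ℤ) * (w a0 - w b0) := le_mul_of_one_le_left (by linarith) hm01
      _ = F (b0, a0) := rfl
  have herase : ∀ p ∈ (B ×ˢ Bᶜ).erase (b0, a0), -((m p.1 p.2 : ℤ) * X) ≤ F p := by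
    intro p hp
    have hpP := Finset.mem_product.mp (Finset.mem_of_mem_erase hp)
    have h1 : w p.1 ≤ X := hwb _ hpP.1
    have h2 : 0 ≤ w p.2 := hwnn _
    have hm : (0 : ℤ) ≤ (m p.1 p.2 : ℤ) := Int.natCast_nonneg _
    have : 0 ≤ (m p.1 p.2 : ℤ) * (w p.2 + (X - w p.1)) := mul_nonneg hm (by linarith)
    simp only [hF]
    nlinarith
  have hsumW : ∑ p ∈ (B ×ˢ Bᶜ).erase (b0, a0), (m p.1 p.2 : ℤ) ≤ W - 1 := by
    have hsub : (B ×ˢ Bᶜ) ⊆ (univ ×ˢ univ : Finset (V × V)) :=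
      Finset.product_subset_product (Finset.subset_univ _) (Finset.subset_univ _)
    have h1 : ∑ p ∈ B ×ˢ Bᶜ, (m p.1 p.2 : ℤ) ≤ ∑ p ∈ (univ ×ˢ univ : Finset (V × V)), (m p.1 p.2 : ℤ) :=
      Finset.sum_le_sum_of_subset_of_nonneg hsub (fun _ _ _ => Int.natCast_nonneg _)
    have h2 : ∑ p ∈ (univ ×ˢ univ : Finset (V × V)), (m p.1 p.2 : ℤ) = W := by
      rw [Finset.sum_product]
    have h3 : (m b0 a0 : ℤ) + ∑ p ∈ (B ×ˢ Bᶜ).erase (b0, a0), (m p.1 p.2 : ℤ)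
        = ∑ p ∈ B ×ˢ Bᶜ, (m p.1 p.2 : ℤ) :=
      Finset.add_sum_erase _ (fun p : V × V => (m p.1 p.2 : ℤ)) hp0mem
    linarith
  have herasesum : -((W - 1) * X) ≤ ∑ p ∈ (B ×ˢ Bᶜ).erase (b0, a0), F p := by
    have hstep : ∑ p ∈ (B ×ˢ Bᶜ).erase (b0, a0), -((m p.1 p.2 : ℤ) * X)
        = -((∑ p ∈ (B ×ˢ Bᶜ).erase (b0, a0), (m p.1 p.2 : ℤ)) * X) := by
      rw [Finset.sum_neg_distrib, Finset.sum_mul]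
    have h1 : (∑ p ∈ (B ×ˢ Bᶜ).erase (b0, a0), (m p.1 p.2 : ℤ)) * X ≤ (W - 1) * X :=
      mul_le_mul_of_nonneg_right hsumW (by omega)
    calc -((W - 1) * X) ≤ -((∑ p ∈ (B ×ˢ Bᶜ).erase (b0, a0), (m p.1 p.2 : ℤ)) * X) := by linarith
      _ = ∑ p ∈ (B ×ˢ Bᶜ).erase (b0, a0), -((m p.1 p.2 : ℤ) * X) := hstep.symm
      _ ≤ ∑ p ∈ (B ×ˢ Bᶜ).erase (b0, a0), F p := Finset.sum_le_sum herase
  have hfinal : W * X - (W - 1) * X = X := by ring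
  rw [hpair, hsplit]
  linarith

/-- The Baker–Norine dichotomy, hard direction included. -/
lemma dichotomy (m : V → V → ℕ) (hsymm : ∀ u v, m u v = m v u)
    (hconn : (assocGraph m).Connected) (D : V → ℤ) :
    (∃ f, Effective f ∧ LinEquiv m D f) ∨
      (∃ ρ : V → ℕ, Function.Injective ρ ∧ ∃ f, Effective f ∧ LinEquiv m (nudiv m ρ - D) f) := by
  obtain ⟨q⟩ : Nonempty V := hconn.nonempty
  obtain ⟨r, hr0, hrstep⟩ := exists_rank m hsymm hconn q
  set W : ℤ := ∑ x, ∑ y, (m x y : ℤ) with hWdef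
  set N : ℕ := univ.sup r with hNdef
  set w : V → ℤ := fun v => (W + 1) ^ (N - r v) with hwdef
  have hW0 : 0 ≤ W := Finset.sum_nonneg fun x _ => Finset.sum_nonneg fun y _ => Int.natCast_nonneg _
  have hwnn : ∀ v, 0 ≤ w v := fun v => pow_nonneg (by omega) _
  obtain ⟨D0, hD0equiv, hD0eff⟩ := stage1 m hsymm hconn q D
  set s0 : ℤ := ∑ v ∈ ({q}ᶜ : Finset V), D0 v with hs0
  have hs0nn : 0 ≤ s0 := Finset.sum_nonneg fun v hv =>
    hD0eff v (by simpa using (Finset.mem_compl.mp hv))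
  set Φmax : ℤ := degDiv D * w q + ∑ v ∈ ({q}ᶜ : Finset V), s0 * w v with hΦ
  have hbound : ∀ D' : V → ℤ, LinEquiv m D D' → (∀ v, v ≠ q → 0 ≤ D' v) →
      (∑ v ∈ ({q}ᶜ : Finset V), D' v) ≤ s0 → (∑ v, D' v * w v) ≤ Φmax := by
    intro D' hEq hEff hSum
    have hdeg : degDiv D' = degDiv D := (degDiv_eq_of_linEquiv hsymm hEq).symm
    have hEffc : ∀ v ∈ ({q}ᶜ : Finset V), 0 ≤ D' v := fun v hv =>
      hEff v (by simpa using (Finset.mem_compl.mp hv))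
    have hsplitdeg : D' q + ∑ v ∈ ({q}ᶜ : Finset V), D' v = degDiv D' := by
      have := Finset.sum_add_sum_compl ({q} : Finset V) D'
      rw [Finset.sum_singleton] at this
      rw [this]
      rfl
    have hq' : D' q * w q ≤ degDiv D * w q := by
      have h1 : 0 ≤ ∑ v ∈ ({q}ᶜ : Finset V), D' v := Finset.sum_nonneg hEffc
      have h2 : D' q ≤ degDiv D := by rw [← hdeg]; linarith
      exact mul_le_mul_of_nonneg_right h2 (hwnn q)
    have hterm : ∀ v ∈ ({q}ᶜ : Finset V), D' v * w v ≤ s0 * w v := by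
      intro v hv
      have h1 : D' v ≤ ∑ u ∈ ({q}ᶜ : Finset V), D' u := Finset.single_le_sum hEffc hv
      exact mul_le_mul_of_nonneg_right (by linarith) (hwnn v)
    calc ∑ v, D' v * w v = D' q * w q + ∑ v ∈ ({q}ᶜ : Finset V), D' v * w v := by
          rw [← Finset.sum_add_sum_compl ({q} : Finset V) (fun v => D' v * w v),
            Finset.sum_singleton]
      _ ≤ degDiv D * w q + ∑ v ∈ ({q}ᶜ : Finset V), s0 * w v :=
          add_le_add hq' (Finset.sum_le_sum hterm)
      _ = Φmax := rfl
  have main : ∀ t : ℕ, ∀ D' : V → ℤ, LinEquiv m D D' → (∀ v, v ≠ q → 0 ≤ D' v) →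
      (∑ v ∈ ({q}ᶜ : Finset V), D' v) ≤ s0 → (Φmax - ∑ v, D' v * w v).toNat = t →
      ((∃ f, Effective f ∧ LinEquiv m D f) ∨
        (∃ ρ : V → ℕ, Function.Injective ρ ∧ ∃ f, Effective f ∧ LinEquiv m (nudiv m ρ - D) f)) := by
    intro t
    induction t using Nat.strong_induction_on with
    | _ t IH =>
      intro D' hEq hEff hSum hMeas
      by_cases hq0 : 0 ≤ D' q
      · left
        refine ⟨D', ?_, hEq⟩
        intro v
        by_cases hv : v = q
        · subst hv; exact hq0
        · exact hEff v hv
      · rcases greedy m D' q with ⟨ρ, hρinj, hρq, hρord⟩ | ⟨B, hBne, hqB, hstuck⟩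
        · right
          refine ⟨ρ, hρinj, nudiv m ρ - D', ?_, ?_⟩
          · intro v
            by_cases hv : v = q
            · subst hv
              have hfil : univ.filter (fun u => ρ u < ρ v) = ∅ := by
                rw [Finset.filter_eq_empty_iff]
                intro x _
                rw [hρq]
                omega
              simp only [Pi.sub_apply, nudiv, hfil, Finset.sum_empty]
              omega
            · have := hρord v hv
              simp only [Pi.sub_apply, nudiv]
              omega
          · rw [linEquiv_iff]
            have h : nudiv m ρ - D - (nudiv m ρ - D') = -(D - D') := by abel
            rw [h]
            exact neg_mem hEq
        · set D'' := D' + tZ m B with hD''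
          have hEq'' : LinEquiv m D D'' := by
            apply linEquiv_trans hEq
            rw [linEquiv_iff]
            have h : D' - D'' = -(tZ m B) := by rw [hD'']; abel
            rw [h]
            exact neg_mem (tZ_mem m B)
          have hEff'' : ∀ v, v ≠ q → 0 ≤ D'' v := by
            intro v hv
            by_cases hvB : v ∈ B
            · have h1 := hstuck v hvB
              rw [hD'']
              simp only [Pi.add_apply]
              rw [tZ_apply_mem m hvB]
              linarith
            · have h1 : 0 ≤ tZ m B v := by
                rw [tZ_apply_not_mem m hvB]
                exact Finset.sum_nonneg fun u _ => Int.natCast_nonneg _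
              have h2 := hEff v hv
              rw [hD'']
              simp only [Pi.add_apply]
              linarith
          have hSum'' : (∑ v ∈ ({q}ᶜ : Finset V), D'' v) ≤ s0 := by
            have h1 : ∑ v ∈ ({q}ᶜ : Finset V), D'' v
                = (∑ v ∈ ({q}ᶜ : Finset V), D' v) + ∑ v ∈ ({q}ᶜ : Finset V), tZ m B v := by
              rw [hD'']
              simp only [Pi.add_apply]
              rw [Finset.sum_add_distrib]
            have h4 : ∑ v, tZ m B v = 0 := by
              have := degDiv_tZ m hsymm B
              simpa [degDiv] using this
            have h3 := Finset.sum_add_sum_compl ({q} : Finset V) (tZ m B)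
            rw [Finset.sum_singleton, h4] at h3
            have h5 : 0 ≤ tZ m B q := by
              rw [tZ_apply_not_mem m hqB]
              exact Finset.sum_nonneg fun u _ => Int.natCast_nonneg _
            linarith
          have hfire : 1 ≤ ∑ v, tZ m B v * w v := by
            have h := fire_bound m hsymm hr0 hrstep hBne hqB
            simp only [hwdef, hWdef, hNdef]
            exact h
          have hφ'' : ∑ v, D'' v * w v = (∑ v, D' v * w v) + ∑ v, tZ m B v * w v := by
            rw [hD'']
            simp only [Pi.add_apply, add_mul]
            rw [Finset.sum_add_distrib]
          have hφmax'' : ∑ v, D'' v * w v ≤ Φmax := hbound D'' hEq'' hEff'' hSum''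
          have hlt : (Φmax - ∑ v, D'' v * w v).toNat < t := by omega
          exact IH _ hlt D'' hEq'' hEff'' hSum'' rfl
  exact main _ D0 hD0equiv hD0eff (le_of_eq hs0.symm) rfl

end BN
namespace BN

open Finset

variable {V : Type} [Fintype V] [DecidableEq V]

set_option linter.unusedSectionVars false
set_option maxHeartbeats 1000000

lemma eff_deg_nonneg {f : V → ℤ} (hf : Effective f) : 0 ≤ degDiv f :=
  Finset.sum_nonneg fun v _ => hf v

lemma exists_inj : ∃ ρ : V → ℕ, Function.Injective ρ :=
  ⟨fun v => ((Fintype.equivFin V) v : ℕ),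
    fun a b h => (Fintype.equivFin V).injective (Fin.val_injective h)⟩

lemma deg_canonical (m : V → V → ℕ) (hsymm : ∀ u v, m u v = m v u) (hloop : ∀ v, m v v = 0) :
    degDiv (canonical m) = 2 * genus m - 2 := by
  obtain ⟨ρ, hρ⟩ := exists_inj (V := V)
  obtain ⟨ρ', hρ', hKν⟩ := nudiv_reverse m hloop hρ
  have h2 : canonical m = nudiv m ρ + nudiv m ρ' := by rw [← hKν]; abel
  rw [h2, degDiv_add, degDiv_nudiv m hsymm hloop hρ, degDiv_nudiv m hsymm hloop hρ']
  ring

lemma eff_of_deg_ge (m : V → V → ℕ) (hsymm : ∀ u v, m u v = m v u) (hloop : ∀ v, m v v = 0)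
    (hconn : (assocGraph m).Connected) (D : V → ℤ) (h : genus m ≤ degDiv D) :
    ∃ f, Effective f ∧ LinEquiv m D f := by
  rcases dichotomy m hsymm hconn D with h1 | ⟨ρ, hρ, f, hf, hlin⟩
  · exact h1
  · exfalso
    have hd : degDiv (nudiv m ρ - D) = degDiv f := degDiv_eq_of_linEquiv hsymm hlin
    rw [degDiv_sub, degDiv_nudiv m hsymm hloop hρ] at hd
    have h0 := eff_deg_nonneg hf
    omega

lemma genus_nonneg (m : V → V → ℕ) (hsymm : ∀ u v, m u v = m v u) (hloop : ∀ v, m v v = 0)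
    (hconn : (assocGraph m).Connected) : 0 ≤ genus m := by
  obtain ⟨q⟩ : Nonempty V := hconn.nonempty
  set D' : V → ℤ := fun v => if v = q then (-1 : ℤ) else 0 with hD'
  rcases greedy m D' q with ⟨ρ, hρinj, hρq, hord⟩ | ⟨B, hBne, hqB, hstuck⟩
  · have h1 : ∀ v ∈ ({q}ᶜ : Finset V), 0 ≤ nudiv m ρ v := by
      intro v hv
      have hvq : v ≠ q := by simpa using (Finset.mem_compl.mp hv)
      have := hord v hvq
      simp only [hD', if_neg hvq] at this
      simp only [nudiv]
      omega
    have h2 : degDiv (nudiv m ρ) = genus m - 1 := degDiv_nudiv m hsymm hloop hρinj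
    have h3 : -1 ≤ nudiv m ρ q := by
      simp only [nudiv]
      have : 0 ≤ ∑ u ∈ univ.filter (fun u => ρ u < ρ q), (m q u : ℤ) :=
        Finset.sum_nonneg fun u _ => Int.natCast_nonneg _
      omega
    have h4 := Finset.sum_add_sum_compl ({q} : Finset V) (nudiv m ρ)
    rw [Finset.sum_singleton] at h4
    have h5 : 0 ≤ ∑ v ∈ ({q}ᶜ : Finset V), nudiv m ρ v := Finset.sum_nonneg h1
    have h6 : degDiv (nudiv m ρ) = ∑ v, nudiv m ρ v := rfl
    omega
  · exfalso
    obtain ⟨r, hr0, hrstep⟩ := exists_rank m hsymm hconn q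
    obtain ⟨b0, hb0, a0, ha0, hm0, -, -⟩ := cut_edge m hr0 hrstep hBne hqB
    have hb0q : b0 ≠ q := fun h => hqB (h ▸ hb0)
    have h1 := hstuck b0 hb0
    have h2 : (1 : ℤ) ≤ ∑ u ∈ Bᶜ, (m b0 u : ℤ) := by
      calc (1 : ℤ) ≤ (m b0 a0 : ℤ) := by exact_mod_cast hm0
        _ ≤ _ := Finset.single_le_sum (fun u _ => Int.natCast_nonneg _) ha0
    simp only [hD', if_neg hb0q] at h1
    omega

lemma not_both (m : V → V → ℕ) (hconn : (assocGraph m).Connected)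
    {D f1 f2 : V → ℤ} {ρ : V → ℕ} (hρ : Function.Injective ρ)
    (h1 : LinEquiv m D f1) (he1 : Effective f1)
    (h2 : LinEquiv m (nudiv m ρ - D) f2) (he2 : Effective f2) : False := by
  apply nudiv_not_equiv_eff m hconn.nonempty hρ
  refine ⟨f1 + f2, fun v => add_nonneg (he1 v) (he2 v), ?_⟩
  rw [linEquiv_iff]
  have h : nudiv m ρ - (f1 + f2) = (nudiv m ρ - D - f2) + (D - f1) := by abel
  rw [h]
  exact add_mem h2 h1

lemma rank_ub (m : V → V → ℕ) (hsymm : ∀ u v, m u v = m v u) (hloop : ∀ v, m v v = 0)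
    (hconn : (assocGraph m).Connected) (d : V → ℤ) (hdeg : degDiv d = 2 * genus m - 2) :
    ∀ x ∈ bnRankSet m d, x ≤ genus m - 1 := by
  intro x hx
  rcases hx with rfl | ⟨hx0, hx⟩
  · have := genus_nonneg m hsymm hloop hconn
    omega
  · by_contra hgt
    push_neg at hgt
    obtain ⟨q⟩ : Nonempty V := hconn.nonempty
    obtain ⟨ρ0, hρ0⟩ := exists_inj (V := V)
    set wdiv : V → ℤ := fun u => if u = q then x - genus m + 1 else 0 with hwdiv
    have hweff : Effective wdiv := by
      intro u
      by_cases h : u = q <;> simp [hwdiv, h] <;> omega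
    have hwdeg : degDiv wdiv = x - genus m + 1 := by
      simp [degDiv, hwdiv]
    set Dt : V → ℤ := d - nudiv m ρ0 + wdiv with hDt
    have hDtdeg : degDiv Dt = x := by
      rw [hDt, degDiv_add, degDiv_sub, hdeg, degDiv_nudiv m hsymm hloop hρ0, hwdeg]
      ring
    obtain ⟨e, heff, helin⟩ := eff_of_deg_ge m hsymm hloop hconn Dt (by omega)
    have hedeg : degDiv e = x := by
      have := degDiv_eq_of_linEquiv hsymm helin
      omega
    obtain ⟨h, hheff, hhlin⟩ := hx e heff hedeg
    apply nudiv_not_equiv_eff m hconn.nonempty hρ0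
    refine ⟨h + wdiv, fun v => add_nonneg (hheff v) (hweff v), ?_⟩
    rw [linEquiv_iff]
    have hA : nudiv m ρ0 - (h + wdiv) = ((d - e) - h) + -(Dt - e) := by
      rw [hDt]; abel
    rw [hA]
    exact add_mem hhlin (neg_mem helin)

lemma mem_rankset (m : V → V → ℕ) (hsymm : ∀ u v, m u v = m v u) (hloop : ∀ v, m v v = 0)
    (hconn : (assocGraph m).Connected) (d : V → ℤ) (hdeg : degDiv d = 2 * genus m - 2)
    (hK : LinEquiv m d (canonical m)) : genus m - 1 ∈ bnRankSet m d := by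
  simp only [bnRankSet, Set.mem_setOf_eq]
  rcases eq_or_lt_of_le (genus_nonneg m hsymm hloop hconn) with h0 | hpos
  · exact Or.inl (by omega)
  · right
    refine ⟨by omega, ?_⟩
    intro e heff hedeg
    by_contra hno
    rcases dichotomy m hsymm hconn (d - e) with hyes | ⟨ρ, hρ, f, hf, hl⟩
    · exact hno hyes
    · have hdf : degDiv f = 0 := by
        have := degDiv_eq_of_linEquiv hsymm hl
        rw [degDiv_sub, degDiv_sub, degDiv_nudiv m hsymm hloop hρ] at this
        omega
      have hf0 : f = 0 := eff_deg_zero hf hdf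
      subst hf0
      obtain ⟨ρ', hρ', hKν⟩ := nudiv_reverse m hloop hρ
      apply nudiv_not_equiv_eff m hconn.nonempty hρ'
      refine ⟨e, heff, ?_⟩
      rw [linEquiv_iff, ← hKν]
      have hA : canonical m - nudiv m ρ - e
          = -(d - canonical m) + -(nudiv m ρ - (d - e) - 0) := by abel
      rw [hA]
      exact add_mem (neg_mem hK) (neg_mem hl)

lemma canon_of_mem (m : V → V → ℕ) (hsymm : ∀ u v, m u v = m v u) (hloop : ∀ v, m v v = 0)
    (hconn : (assocGraph m).Connected) (d : V → ℤ) (hdeg : degDiv d = 2 * genus m - 2)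
    (hmem : genus m - 1 ∈ bnRankSet m d) : LinEquiv m d (canonical m) := by
  by_contra hnc
  have h1 : ¬ ∃ f, Effective f ∧ LinEquiv m (canonical m - d) f := by
    rintro ⟨f, hf, hl⟩
    have hdf : degDiv f = 0 := by
      have := degDiv_eq_of_linEquiv hsymm hl
      rw [degDiv_sub, deg_canonical m hsymm hloop] at this
      omega
    have hf0 : f = 0 := eff_deg_zero hf hdf
    subst hf0
    apply hnc
    rw [linEquiv_iff]
    have hA : d - canonical m = -(canonical m - d - 0) := by abel
    rw [hA]
    exact neg_mem hl
  rcases dichotomy m hsymm hconn (canonical m - d) with h | ⟨ρ, hρ, f, hf, hl⟩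
  · exact h1 h
  · have hdf : degDiv f = genus m - 1 := by
      have := degDiv_eq_of_linEquiv hsymm hl
      rw [degDiv_sub, degDiv_sub, degDiv_nudiv m hsymm hloop hρ,
        deg_canonical m hsymm hloop] at this
      omega
    obtain ⟨ρ', hρ', hKν⟩ := nudiv_reverse m hloop hρ
    rcases hmem with hg0 | ⟨h0, hproc⟩
    · have := eff_deg_nonneg hf
      omega
    · obtain ⟨h, hh, hhl⟩ := hproc f hf hdf
      apply nudiv_not_equiv_eff m hconn.nonempty hρ'
      refine ⟨h, hh, ?_⟩
      rw [linEquiv_iff, ← hKν]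
      have hA : canonical m - nudiv m ρ - h
          = -((nudiv m ρ - (canonical m - d)) - f) + ((d - f) - h) := by abel
      rw [hA]
      exact add_mem (neg_mem hl) hhl

end BN


/-- A divisor of degree `2g - 2` has rank at most `g - 1`, with equality iff it
is linearly equivalent to the canonical divisor. -/
theorem bnRank_degree_canonical {V : Type} [Fintype V] [DecidableEq V]
    (m : V → V → ℕ) (hsymm : ∀ u v, m u v = m v u) (hloop : ∀ v, m v v = 0)
    (hconn : (assocGraph m).Connected)
    (d : V → ℤ) (hdeg : degDiv d = 2 * genus m - 2) :
    bnRank m d ≤ genus m - 1 ∧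
      (bnRank m d = genus m - 1 ↔ LinEquiv m d (canonical m)) := by
  have hub := BN.rank_ub m hsymm hloop hconn d hdeg
  have hne : (bnRankSet m d).Nonempty := ⟨-1, Or.inl rfl⟩
  have hbdd : BddAbove (bnRankSet m d) := ⟨genus m - 1, hub⟩
  refine ⟨csSup_le hne hub, ?_, ?_⟩
  · intro h
    have hmem : genus m - 1 ∈ bnRankSet m d := h ▸ Int.csSup_mem hne hbdd
    exact BN.canon_of_mem m hsymm hloop hconn d hdeg hmem
  · intro hK
    exact le_antisymm (csSup_le hne hub)
      (le_csSup hbdd (BN.mem_rankset m hsymm hloop hconn d hdeg hK))
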